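/- Let σ = σ_1 ⊕_a σ_2 be a direct sum of internal type of strongly convex rational polyhedral cones, where σ_1 has k_1 extreme rays and σ_2 has k_2 extreme rays. Then σ has exactly k_1 + k_2 extreme rays, namely the union of the extreme rays of σ_1 and σ_2. -/

import Mathlib

open scoped BigOperators

/-- The cone of nonnegative rational combinations of elements of `S`. -/
def posSpan {n : ℕ} (S : Set (Fin n → ℚ)) : Set (Fin n → ℚ) :=
  {x | ∃ (k : ℕ) (c : Fin k → ℚ) (b : Fin k → (Fin n → ℚ)),
    (∀ i, 0 ≤ c i) ∧ (∀ i, b i ∈ S) ∧ x = ∑ i, c i • b i}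

/-- A rational polyhedral cone: `posSpan` of a finite set. -/
def IsPolyCone {n : ℕ} (σ : Set (Fin n → ℚ)) : Prop :=
  ∃ B : Finset (Fin n → ℚ), σ = posSpan (B : Set (Fin n → ℚ))

/-- A cone is strongly convex if `σ ∩ (-σ) = {0}`. -/
def StronglyConvex {n : ℕ} (σ : Set (Fin n → ℚ)) : Prop :=
  ∀ x, x ∈ σ → -x ∈ σ → x = 0

/-- dot product in `ℚ^n`. -/
def dotQ {n : ℕ} (c x : Fin n → ℚ) : ℚ := ∑ i, c i * x i

/-- `R` is an extreme ray of `σ`: a one-dimensional face cut out by a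
supporting vector `c`. -/
def IsExtremeRay {n : ℕ} (σ R : Set (Fin n → ℚ)) : Prop :=
  ∃ c : Fin n → ℚ, (∀ x ∈ σ, 0 ≤ dotQ c x) ∧
    R = {x ∈ σ | dotQ c x = 0} ∧
    Module.finrank ℚ (Submodule.span ℚ R) = 1

/-- The dimension of a cone: dimension of its rational linear span. -/
noncomputable def coneDim {n : ℕ} (σ : Set (Fin n → ℚ)) : ℕ :=
  Module.finrank ℚ (Submodule.span ℚ σ)

/-- `σ` is the direct sum of `σ₁` and `σ₂` along `a`. -/
def IsDirectSumAlong {n : ℕ} (σ₁ σ₂ σ : Set (Fin n → ℚ)) (a : Fin n → ℚ) : Prop :=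
  a ∈ σ₁ ∩ σ₂ ∧
  Submodule.span ℚ σ₁ ⊓ Submodule.span ℚ σ₂ = Submodule.span ℚ {a} ∧
  σ = posSpan (σ₁ ∪ σ₂)

/-- `σ` is a direct sum of `σ₁` and `σ₂`. -/
def IsDirectSum {n : ℕ} (σ₁ σ₂ σ : Set (Fin n → ℚ)) : Prop :=
  ∃ a, IsDirectSumAlong σ₁ σ₂ σ a

/-- `a` lies on an extreme ray of `σ`. -/
def OnExtremeRay {n : ℕ} (σ : Set (Fin n → ℚ)) (a : Fin n → ℚ) : Prop :=
  ∃ R, IsExtremeRay σ R ∧ a ∈ R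

/-- The ray `ℚ⁺ r`. -/
def rayOf {n : ℕ} (r : Fin n → ℚ) : Set (Fin n → ℚ) :=
  {x | ∃ q : ℚ, 0 ≤ q ∧ x = q • r}


section Aux


-- dotQ lemmas
lemma dotQ_add {n : ℕ} (c x y : Fin n → ℚ) : dotQ c (x + y) = dotQ c x + dotQ c y := by
  simp [dotQ, mul_add, Finset.sum_add_distrib]

lemma dotQ_smul {n : ℕ} (c : Fin n → ℚ) (q : ℚ) (x : Fin n → ℚ) :
    dotQ c (q • x) = q * dotQ c x := by
  simp [dotQ, Finset.mul_sum]; ring_nf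
  exact Finset.sum_congr rfl fun i _ => by ring

lemma dotQ_zero {n : ℕ} (c : Fin n → ℚ) : dotQ c 0 = 0 := by simp [dotQ]

lemma dotQ_comm {n : ℕ} (c x : Fin n → ℚ) : dotQ c x = dotQ x c := by
  simp [dotQ, mul_comm]

lemma dotQ_sub {n : ℕ} (c x y : Fin n → ℚ) : dotQ c (x - y) = dotQ c x - dotQ c y := by
  simp [dotQ, mul_sub, Finset.sum_sub_distrib]

lemma dotQ_sum {n k : ℕ} (c : Fin n → ℚ) (f : Fin k → Fin n → ℚ) :
    dotQ c (∑ i, f i) = ∑ i, dotQ c (f i) := by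
  unfold dotQ
  rw [Finset.sum_comm]
  exact Finset.sum_congr rfl fun i _ => by simp [Finset.mul_sum]

lemma dotQ_self_pos {n : ℕ} {x : Fin n → ℚ} (hx : x ≠ 0) : 0 < dotQ x x := by
  obtain ⟨i, hi⟩ := Function.ne_iff.mp hx
  apply Finset.sum_pos' (fun j _ => mul_self_nonneg _)
  exact ⟨i, Finset.mem_univ i, mul_self_pos.mpr hi⟩

-- posSpan lemmas
lemma subset_posSpan {n : ℕ} (S : Set (Fin n → ℚ)) : S ⊆ posSpan S := by
  intro x hx
  exact ⟨1, fun _ => 1, fun _ => x, fun _ => zero_le_one, fun _ => hx, by simp⟩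

lemma posSpan_zero_mem {n : ℕ} (S : Set (Fin n → ℚ)) : (0 : Fin n → ℚ) ∈ posSpan S :=
  ⟨0, Fin.elim0, Fin.elim0, fun i => i.elim0, fun i => i.elim0, by simp⟩

lemma posSpan_add_mem {n : ℕ} {S : Set (Fin n → ℚ)} {x y : Fin n → ℚ}
    (hx : x ∈ posSpan S) (hy : y ∈ posSpan S) : x + y ∈ posSpan S := by
  obtain ⟨k, c, b, hc, hb, rfl⟩ := hx
  obtain ⟨l, d, e, hd, he, rfl⟩ := hy
  refine ⟨k + l, Fin.append c d, Fin.append b e, ?_, ?_, ?_⟩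
  · intro i
    refine Fin.addCases (fun j => ?_) (fun j => ?_) i <;> simp [hc, hd]
  · intro i
    refine Fin.addCases (fun j => ?_) (fun j => ?_) i <;> simp [hb, he]
  · rw [Fin.sum_univ_add]
    simp

lemma posSpan_smul_mem {n : ℕ} {S : Set (Fin n → ℚ)} {x : Fin n → ℚ} {q : ℚ}
    (hq : 0 ≤ q) (hx : x ∈ posSpan S) : q • x ∈ posSpan S := by
  obtain ⟨k, c, b, hc, hb, rfl⟩ := hx
  exact ⟨k, fun i => q * c i, b, fun i => mul_nonneg hq (hc i),
    hb, by rw [Finset.smul_sum]; exact Finset.sum_congr rfl fun i _ => by rw [smul_smul]⟩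

lemma posSpan_sum_mem {n : ℕ} {S : Set (Fin n → ℚ)} {k : ℕ} {g : Fin k → Fin n → ℚ}
    (hg : ∀ i, g i ∈ posSpan S) : ∑ i, g i ∈ posSpan S := by
  induction k with
  | zero => simpa using posSpan_zero_mem S
  | succ m ih =>
    rw [Fin.sum_univ_castSucc]
    exact posSpan_add_mem (ih (fun i => hg i.castSucc)) (hg (Fin.last m))

lemma dotQ_smul_left {n : ℕ} (c : Fin n → ℚ) (q : ℚ) (x : Fin n → ℚ) :
    dotQ (q • c) x = q * dotQ c x := by
  simp [dotQ, Finset.mul_sum, mul_assoc]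

lemma gordan {n : ℕ} : ∀ (m : ℕ) (a : Fin m → Fin n → ℚ),
    (¬ ∃ l : Fin m → ℚ, (∀ i, 0 ≤ l i) ∧ (∃ i, l i ≠ 0) ∧ ∑ i, l i • a i = 0) →
    ∃ w, ∀ i, 0 < dotQ w (a i) := by
  intro m
  induction m with
  | zero => exact fun a _ => ⟨0, fun i => i.elim0⟩
  | succ m ih =>
    intro a hdep
    have hdep' : ¬ ∃ l : Fin m → ℚ, (∀ i, 0 ≤ l i) ∧ (∃ i, l i ≠ 0) ∧
        ∑ i, l i • a i.castSucc = 0 := by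
      rintro ⟨l, h0, ⟨i, hi⟩, hsum⟩
      refine hdep ⟨Fin.snoc l 0, ?_, ⟨i.castSucc, by simp [Fin.snoc_castSucc, hi]⟩, ?_⟩
      · intro j
        induction j using Fin.lastCases with
        | last => simp
        | cast j => simpa using h0 j
      · rw [Fin.sum_univ_castSucc]
        simpa using hsum
    obtain ⟨w, hw⟩ := ih _ hdep'
    set aL := a (Fin.last m) with haLdef
    by_cases hα : 0 < dotQ w aL
    · refine ⟨w, fun i => ?_⟩
      induction i using Fin.lastCases with
      | last => exact hα
      | cast j => exact hw j
    push_neg at hα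
    have haL : aL ≠ 0 := by
      rintro h0
      refine hdep ⟨fun j => if j = Fin.last m then 1 else 0, fun j => by positivity,
        ⟨Fin.last m, by simp⟩, ?_⟩
      rw [Fin.sum_univ_castSucc]
      have : ∀ j : Fin m, (if (j.castSucc : Fin (m+1)) = Fin.last m then (1:ℚ) else 0) = 0 :=
        fun j => if_neg (Fin.castSucc_lt_last j).ne
      simp [this]
      exact h0
    have hsq : 0 < dotQ aL aL := dotQ_self_pos haL
    set q : Fin m → ℚ := fun i => dotQ aL (a i.castSucc) / dotQ aL aL with hqdef
    set b : Fin m → Fin n → ℚ := fun i => a i.castSucc - q i • aL with hbdef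
    have hbort : ∀ i, dotQ aL (b i) = 0 := by
      intro i
      rw [hbdef]
      simp only [dotQ_sub, dotQ_smul, hqdef]
      field_simp
      ring
    by_cases hb : ∃ l : Fin m → ℚ, (∀ i, 0 ≤ l i) ∧ (∃ i, l i ≠ 0) ∧ ∑ i, l i • b i = 0
    · obtain ⟨l, hl0, ⟨i₀, hi₀⟩, hbsum⟩ := hb
      set μ : ℚ := ∑ i, l i * q i with hμdef
      have hmain : ∑ i, l i • a i.castSucc = μ • aL := by
        have h3 : ∑ i, l i • b i = ∑ i, l i • a i.castSucc - (∑ i, l i * q i) • aL := by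
          simp only [hbdef, smul_sub, smul_smul]
          rw [Finset.sum_sub_distrib, Finset.sum_smul]
        rw [h3] at hbsum
        exact sub_eq_zero.mp hbsum
      have hpos : 0 < ∑ i, l i * dotQ w (a i.castSucc) := by
        apply Finset.sum_pos' (fun j _ => mul_nonneg (hl0 j) (hw j).le)
        exact ⟨i₀, Finset.mem_univ i₀, mul_pos ((hl0 i₀).lt_of_ne (Ne.symm hi₀)) (hw i₀)⟩
      have heq : ∑ i, l i * dotQ w (a i.castSucc) = μ * dotQ w aL := by
        have h1 : dotQ w (∑ i, l i • a i.castSucc) = ∑ i, l i * dotQ w (a i.castSucc) := by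
          rw [dotQ_sum]
          exact Finset.sum_congr rfl fun i _ => dotQ_smul _ _ _
        rw [← h1, hmain, dotQ_smul]
      have hμneg : μ < 0 := by nlinarith
      refine absurd ⟨Fin.snoc l (-μ), ?_, ⟨Fin.last m, by simp; linarith⟩, ?_⟩ hdep
      · intro j
        induction j using Fin.lastCases with
        | last => simp; linarith
        | cast j => simpa using hl0 j
      · rw [Fin.sum_univ_castSucc]
        have h2 : ∑ i : Fin m, (Fin.snoc l (-μ) : Fin (m+1) → ℚ) i.castSucc • a i.castSucc
            = ∑ i, l i • a i.castSucc := Finset.sum_congr rfl fun i _ => by simp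
        rw [h2, hmain]
        simp [neg_smul]
        exact add_neg_cancel _
    · obtain ⟨u, hu⟩ := ih b hb
      set v : Fin n → ℚ := u - (dotQ aL u / dotQ aL aL) • aL with hvdef
      have hvaL : dotQ v aL = 0 := by
        rw [hvdef, dotQ_comm, dotQ_sub, dotQ_smul]
        rw [dotQ_comm aL u] at *
        field_simp
        ring
      have hvb : ∀ i : Fin m, 0 < dotQ v (a i.castSucc) := by
        intro i
        have e1 : a i.castSucc = b i + q i • aL := by rw [hbdef]; simp
        have e2 : dotQ v (b i) = dotQ u (b i) := by
          rw [hvdef]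
          rw [dotQ_comm, dotQ_sub, dotQ_smul, dotQ_comm (b i) u]
          have := hbort i
          rw [dotQ_comm aL (b i)] at this
          rw [this]
          ring
        rw [e1, dotQ_add, dotQ_smul, hvaL, e2]
        simpa using hu i
      -- choose small t
      set T : Finset ℚ := insert 1 (Finset.univ.image fun i : Fin m =>
        dotQ v (a i.castSucc) / (1 + |dotQ aL (a i.castSucc)|)) with hTdef
      have hTne : T.Nonempty := ⟨1, by simp [hTdef]⟩
      set t : ℚ := T.min' hTne with htdef
      have ht_pos : 0 < t := by
        apply lt_of_lt_of_le _ (le_refl t)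
        have : ∀ x ∈ T, 0 < x := by
          intro x hx
          rw [hTdef] at hx
          simp only [Finset.mem_insert, Finset.mem_image] at hx
          rcases hx with rfl | ⟨i, _, rfl⟩
          · norm_num
          · apply div_pos (hvb i)
            have := abs_nonneg (dotQ aL (a i.castSucc)); linarith
        exact this t (T.min'_mem hTne)
      refine ⟨v + (t/2) • aL, fun i => ?_⟩
      have hdadd : ∀ x, dotQ (v + (t/2) • aL) x = dotQ v x + (t/2) * dotQ aL x := by
        intro x
        rw [dotQ_comm, dotQ_add, dotQ_comm x v, dotQ_comm x _, dotQ_smul_left]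
      induction i using Fin.lastCases with
      | last => rw [hdadd]; rw [← haLdef, hvaL]; nlinarith
      | cast j =>
        rw [hdadd]
        have hle : t ≤ dotQ v (a j.castSucc) / (1 + |dotQ aL (a j.castSucc)|) := by
          apply Finset.min'_le
          rw [hTdef]
          exact Finset.mem_insert_of_mem (Finset.mem_image_of_mem _ (Finset.mem_univ j))
        have habs : 0 ≤ |dotQ aL (a j.castSucc)| := abs_nonneg _
        have hgpos : (0:ℚ) < 1 + |dotQ aL (a j.castSucc)| := by linarith
        have h1 : t * (1 + |dotQ aL (a j.castSucc)|) ≤ dotQ v (a j.castSucc) :=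
          (le_div_iff₀ hgpos).mp hle
        have h2 := neg_abs_le (dotQ aL (a j.castSucc))
        nlinarith

/-- A strongly convex polyhedral cone admits a functional positive away from 0. -/
lemma exists_strict_functional {n : ℕ} (B : Finset (Fin n → ℚ))
    (hsc : StronglyConvex (posSpan (B : Set (Fin n → ℚ)))) :
    ∃ w : Fin n → ℚ, (∀ x ∈ posSpan (B : Set (Fin n → ℚ)), 0 ≤ dotQ w x) ∧
      (∀ x ∈ posSpan (B : Set (Fin n → ℚ)), dotQ w x = 0 → x = 0) := by
  classical
  set B' := B.erase 0 with hB'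
  set m := B'.card with hm
  set e := B'.equivFin with he
  set av : Fin m → Fin n → ℚ := fun i => (e.symm i : Fin n → ℚ) with hav
  have havB : ∀ i, av i ∈ B' := fun i => (e.symm i).2
  have hnodep : ¬ ∃ l : Fin m → ℚ, (∀ i, 0 ≤ l i) ∧ (∃ i, l i ≠ 0) ∧ ∑ i, l i • av i = 0 := by
    rintro ⟨l, hl0, ⟨j, hj⟩, hsum⟩
    classical
    have h1 : l j • av j ∈ posSpan (B : Set (Fin n → ℚ)) := by
      refine ⟨1, fun _ => l j, fun _ => av j, fun _ => hl0 j,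
        fun _ => (Finset.mem_of_mem_erase (havB j) : (av j : Fin n → ℚ) ∈ B), by simp⟩
    set f' : Fin m → Fin n → ℚ := fun i => (if i = j then 0 else l i) • av i with hf'
    have hsplit : ∑ i, f' i = (∑ i, l i • av i) - l j • av j := by
      rw [← Finset.sum_erase_add Finset.univ f' (Finset.mem_univ j),
          ← Finset.sum_erase_add Finset.univ (fun i => l i • av i) (Finset.mem_univ j)]
      have : ∑ i ∈ Finset.univ.erase j, f' i = ∑ i ∈ Finset.univ.erase j, l i • av i :=
        Finset.sum_congr rfl fun i hi => by
          simp [hf', if_neg (Finset.ne_of_mem_erase hi)]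
      rw [this]
      simp [hf']
    have h2mem : -(l j • av j) ∈ posSpan (B : Set (Fin n → ℚ)) := by
      have : -(l j • av j) = ∑ i, f' i := by rw [hsplit, hsum]; abel
      rw [this]
      refine ⟨m, fun i => if i = j then 0 else l i, av, ?_,
        fun i => Finset.mem_of_mem_erase (havB i), rfl⟩
      intro i
      dsimp only
      split
      · exact le_refl 0
      · exact hl0 i
    have hz : l j • av j = 0 := hsc _ h1 h2mem
    have : (av j : Fin n → ℚ) = 0 := by
      rcases smul_eq_zero.mp hz with h | h
      · exact absurd h hj
      · exact h
    exact (Finset.ne_of_mem_erase (havB j)) (by exact_mod_cast this)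
  obtain ⟨w, hw⟩ := gordan m av hnodep
  have hwB : ∀ b ∈ B, 0 ≤ dotQ w b ∧ (dotQ w b = 0 → b = 0) := by
    intro b hb
    by_cases hb0 : b = 0
    · subst hb0; simp [dotQ_zero]
    · have hbB' : b ∈ B' := Finset.mem_erase.mpr ⟨hb0, hb⟩
      have : av (e ⟨b, hbB'⟩) = b := by simp [hav]
      have hpos := hw (e ⟨b, hbB'⟩)
      rw [this] at hpos
      exact ⟨hpos.le, fun h => absurd h hpos.ne'⟩
  refine ⟨w, ?_, ?_⟩
  · rintro x ⟨k, c, b, hc, hb, rfl⟩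
    rw [dotQ_sum]
    apply Finset.sum_nonneg
    intro i _
    rw [dotQ_smul]
    exact mul_nonneg (hc i) (hwB (b i) (hb i)).1
  · rintro x ⟨k, c, b, hc, hb, rfl⟩ hzero
    rw [dotQ_sum] at hzero
    have hterm : ∀ i ∈ Finset.univ, dotQ w (c i • b i) = 0 :=
      (Finset.sum_eq_zero_iff_of_nonneg (fun i _ => by
        rw [dotQ_smul]; exact mul_nonneg (hc i) (hwB (b i) (hb i)).1)).mp hzero
    apply Finset.sum_eq_zero
    intro i _
    rcases eq_or_lt_of_le (hc i) with hc0 | hcpos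
    · rw [← hc0, zero_smul]
    · have := hterm i (Finset.mem_univ i)
      rw [dotQ_smul] at this
      have hd0 : dotQ w (b i) = 0 := by
        rcases mul_eq_zero.mp this with h | h
        · exact absurd h.symm hcpos.ne
        · exact h
      rw [(hwB (b i) (hb i)).2 hd0, smul_zero]

/-- Any linear functional on `ℚ^n` is a dot product. -/
lemma exists_dot_vec {n : ℕ} (f : (Fin n → ℚ) →ₗ[ℚ] ℚ) :
    ∃ c : Fin n → ℚ, ∀ x, dotQ c x = f x := by
  classical
  refine ⟨fun i => f (fun j => if i = j then 1 else 0), fun x => ?_⟩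
  conv_rhs => rw [pi_eq_sum_univ x, map_sum]
  unfold dotQ
  refine Finset.sum_congr rfl fun i _ => ?_
  rw [map_smul, smul_eq_mul, mul_comm]

/-- Extend two agreeing functionals on two subspaces to a global one. -/
lemma exists_extension {n : ℕ} (S₁ S₂ : Submodule ℚ (Fin n → ℚ))
    (D E : (Fin n → ℚ) →ₗ[ℚ] ℚ) (hT : ∀ x ∈ S₁ ⊓ S₂, D x = E x) :
    ∃ c : Fin n → ℚ, (∀ x ∈ S₁, dotQ c x = D x) ∧ (∀ x ∈ S₂, dotQ c x = E x) := by
  classical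
  set T : Submodule ℚ (Fin n → ℚ) := S₁ ⊓ S₂ with hTdef
  -- complement U of T inside S₂
  obtain ⟨U', hU'⟩ := Submodule.exists_isCompl (T.comap S₂.subtype)
  set U : Submodule ℚ (Fin n → ℚ) := U'.map S₂.subtype with hUdef
  have hUS₂ : U ≤ S₂ := Submodule.map_subtype_le S₂ U'
  have hTU : T ⊔ U = S₂ := by
    have h1 : (T.comap S₂.subtype ⊔ U').map S₂.subtype = S₂ := by
      rw [hU'.sup_eq_top, Submodule.map_subtype_top]
    rw [Submodule.map_sup, Submodule.map_comap_subtype] at h1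
    rw [inf_eq_right.mpr (inf_le_right : T ≤ S₂)] at h1
    exact h1
  have hS₁U : ∀ x, x ∈ S₁ → x ∈ U → x = 0 := by
    intro x hx₁ hxU
    obtain ⟨u, huU', rfl⟩ := hxU
    have : (u : Fin n → ℚ) ∈ T := ⟨hx₁, u.2⟩
    have : u ∈ T.comap S₂.subtype := this
    have h5 : u ∈ T.comap S₂.subtype ⊓ U' := ⟨this, huU'⟩
    rw [hU'.inf_eq_bot, Submodule.mem_bot] at h5
    simp [h5]
  -- complement Q of U containing S₁, via quotient by S₁
  set π := S₁.mkQ with hπ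
  obtain ⟨C, hC⟩ := Submodule.exists_isCompl (U.map π)
  set Q : Submodule ℚ (Fin n → ℚ) := C.comap π with hQdef
  have hS₁Q : S₁ ≤ Q := by
    intro x hx
    have : π x = 0 := by simp [hπ, Submodule.Quotient.mk_eq_zero, hx]
    simp [hQdef, Submodule.mem_comap, this]
  have hUQ : IsCompl U Q := by
    constructor
    · rw [disjoint_iff]
      rw [Submodule.eq_bot_iff]
      rintro x ⟨hxU, hxQ⟩
      have h1 : π x ∈ U.map π := Submodule.mem_map_of_mem hxU
      have h2 : π x ∈ C := hxQ
      have : π x ∈ U.map π ⊓ C := ⟨h1, h2⟩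
      rw [hC.inf_eq_bot] at this
      have hxS₁ : x ∈ S₁ := by
        rwa [Submodule.mem_bot, hπ, ← LinearMap.mem_ker, Submodule.ker_mkQ] at this
      exact hS₁U x hxS₁ hxU
    · rw [codisjoint_iff]
      rw [eq_top_iff]
      intro v _
      have : π v ∈ U.map π ⊔ C := by rw [hC.sup_eq_top]; trivial
      obtain ⟨y, hy, z, hz, hyz⟩ := Submodule.mem_sup.mp this
      obtain ⟨u, huU, rfl⟩ := hy
      refine Submodule.mem_sup.mpr ⟨u, huU, v - u, ?_, by abel⟩
      have : π (v - u) = z := by rw [map_sub, ← hyz]; abel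
      simp [hQdef, Submodule.mem_comap, this, hz]
  set proj := U.linearProjOfIsCompl Q hUQ with hproj
  set f : (Fin n → ℚ) →ₗ[ℚ] ℚ := D + (E - D).comp (U.subtype.comp proj) with hf
  have hfS₁ : ∀ x ∈ S₁, f x = D x := by
    intro x hx
    have : proj x = 0 := Submodule.projectionOnto_apply_of_mem_right hUQ (hS₁Q hx)
    simp [hf, this]
  have hfS₂ : ∀ x ∈ S₂, f x = E x := by
    intro x hx
    rw [← hTU] at hx
    obtain ⟨t, ht, u, hu, rfl⟩ := Submodule.mem_sup.mp hx
    have hprojt : proj t = 0 :=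
      Submodule.projectionOnto_apply_of_mem_right hUQ (hS₁Q (by exact ht.1))
    have hproju : proj u = ⟨u, hu⟩ := Submodule.linearProjOfIsCompl_apply_left hUQ ⟨u, hu⟩
    have hDE : D t = E t := hT t ht
    simp only [hf, LinearMap.add_apply, LinearMap.comp_apply, map_add, hprojt, hproju]
    simp [hDE]
  obtain ⟨c, hc⟩ := exists_dot_vec f
  exact ⟨c, fun x hx => by rw [hc, hfS₁ x hx], fun x hx => by rw [hc, hfS₂ x hx]⟩

-- continuation: basic cone lemmas
/-- sum of members of a posSpan is a member. -/
lemma posSpan_finsum_mem {n : ℕ} {S : Set (Fin n → ℚ)} {k : ℕ} {g : Fin k → Fin n → ℚ}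
    (hg : ∀ i, g i ∈ posSpan S) : ∑ i, g i ∈ posSpan S := by
  induction k with
  | zero => simpa using posSpan_zero_mem S
  | succ m ih =>
    rw [Fin.sum_univ_castSucc]
    exact posSpan_add_mem (ih (fun i => hg i.castSucc)) (hg (Fin.last m))

/-- decomposition of elements of the sum cone. -/
lemma sum_decomp {n : ℕ} {σ₁ σ₂ : Set (Fin n → ℚ)} (B₁ B₂ : Finset (Fin n → ℚ))
    (hB₁ : σ₁ = posSpan (B₁ : Set (Fin n → ℚ))) (hB₂ : σ₂ = posSpan (B₂ : Set (Fin n → ℚ)))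
    {x : Fin n → ℚ} (hx : x ∈ posSpan (σ₁ ∪ σ₂)) :
    ∃ x₁ ∈ σ₁, ∃ x₂ ∈ σ₂, x = x₁ + x₂ := by
  classical
  obtain ⟨k, c, b, hc, hb, rfl⟩ := hx
  refine ⟨∑ i, if b i ∈ σ₁ then c i • b i else 0, ?_,
          ∑ i, if b i ∈ σ₁ then 0 else c i • b i, ?_, ?_⟩
  · rw [hB₁]
    apply posSpan_finsum_mem
    intro i
    split
    · rename_i h
      exact posSpan_smul_mem (hc i) h
    · exact posSpan_zero_mem _
  · rw [hB₂]
    apply posSpan_finsum_mem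
    intro i
    split
    · exact posSpan_zero_mem _
    · rename_i h
      rcases hb i with h1 | h2
      · exact absurd h1 h
      · rw [hB₂] at h2
        exact posSpan_smul_mem (hc i) h2

  · rw [← Finset.sum_add_distrib]
    refine Finset.sum_congr rfl fun i _ => ?_
    split <;> simp

lemma subset_sum_left {n : ℕ} {σ₁ σ₂ : Set (Fin n → ℚ)} :
    σ₁ ⊆ posSpan (σ₁ ∪ σ₂) := fun x hx => subset_posSpan _ (Or.inl hx)

lemma subset_sum_right {n : ℕ} {σ₁ σ₂ : Set (Fin n → ℚ)} :
    σ₂ ⊆ posSpan (σ₁ ∪ σ₂) := fun x hx => subset_posSpan _ (Or.inr hx)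

/-- a set whose span has dim 1 spans the same as any of its nonzero elements. -/
lemma span_dim_one {n : ℕ} {R : Set (Fin n → ℚ)}
    (hfin : Module.finrank ℚ (Submodule.span ℚ R) = 1) {r : Fin n → ℚ}
    (hr : r ∈ R) (hr0 : r ≠ 0) : Submodule.span ℚ R = Submodule.span ℚ {r} := by
  have hle : Submodule.span ℚ {r} ≤ Submodule.span ℚ R :=
    Submodule.span_mono (Set.singleton_subset_iff.mpr hr)
  have h1 : Module.finrank ℚ (Submodule.span ℚ ({r} : Set (Fin n → ℚ))) = 1 :=
    finrank_span_singleton hr0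
  exact (Submodule.eq_of_le_of_finrank_le hle (by rw [hfin, h1])).symm

lemma exists_nonzero_of_dim_one {n : ℕ} {R : Set (Fin n → ℚ)}
    (hfin : Module.finrank ℚ (Submodule.span ℚ R) = 1) : ∃ r ∈ R, r ≠ 0 := by
  by_contra h
  push_neg at h
  have : Submodule.span ℚ R = ⊥ := Submodule.span_eq_bot.mpr h
  rw [this] at hfin
  simp at hfin

-- Direction 2 helper: an extreme ray of σ with a nonzero point in σ₁ is an extreme ray of σ₁.
lemma extreme_ray_restrict {n : ℕ} {σ₁ σ₂ σ : Set (Fin n → ℚ)} (B₁ B₂ : Finset (Fin n → ℚ))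
    (hB₁ : σ₁ = posSpan (B₁ : Set (Fin n → ℚ))) (hB₂ : σ₂ = posSpan (B₂ : Set (Fin n → ℚ)))
    {a : Fin n → ℚ}
    (hspan : Submodule.span ℚ σ₁ ⊓ Submodule.span ℚ σ₂ = Submodule.span ℚ {a})
    (hσ : σ = posSpan (σ₁ ∪ σ₂))
    (hint₁ : ¬ OnExtremeRay σ₁ a) (ha₁ : a ∈ σ₁)
    {c : Fin n → ℚ} {R : Set (Fin n → ℚ)}
    (hc : ∀ x ∈ σ, 0 ≤ dotQ c x) (hR : R = {x ∈ σ | dotQ c x = 0})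
    (hrank : Module.finrank ℚ (Submodule.span ℚ R) = 1)
    {r : Fin n → ℚ} (hrR : r ∈ R) (hr0 : r ≠ 0) (hrσ₁ : r ∈ σ₁) :
    IsExtremeRay σ₁ R := by
  have hsub₁ : σ₁ ⊆ σ := by rw [hσ]; exact subset_sum_left
  have hsub₂ : σ₂ ⊆ σ := by rw [hσ]; exact subset_sum_right
  have hc₁ : ∀ x ∈ σ₁, 0 ≤ dotQ c x := fun x hx => hc x (hsub₁ hx)
  set F₁ : Set (Fin n → ℚ) := {x ∈ σ₁ | dotQ c x = 0} with hF₁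
  have hrF₁ : r ∈ F₁ := ⟨hrσ₁, by rw [hR] at hrR; exact hrR.2⟩
  have hF₁R : F₁ ⊆ R := by
    rintro x ⟨hx₁, hx2⟩
    rw [hR]; exact ⟨hsub₁ hx₁, hx2⟩
  have hrankF₁ : Module.finrank ℚ (Submodule.span ℚ F₁) = 1 := by
    have hle1 : Submodule.span ℚ ({r} : Set (Fin n → ℚ)) ≤ Submodule.span ℚ F₁ :=
      Submodule.span_mono (Set.singleton_subset_iff.mpr hrF₁)
    have hle2 : Submodule.span ℚ F₁ ≤ Submodule.span ℚ R := Submodule.span_mono hF₁R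
    have h1 := finrank_span_singleton (K := ℚ) hr0
    have h2 : Module.finrank ℚ (Submodule.span ℚ F₁) ≤ 1 := by
      rw [← hrank]; exact Submodule.finrank_mono hle2
    have h3 : 1 ≤ Module.finrank ℚ (Submodule.span ℚ F₁) := by
      rw [← h1]; exact Submodule.finrank_mono hle1
    omega
  have hexF₁ : IsExtremeRay σ₁ F₁ := ⟨c, hc₁, rfl, hrankF₁⟩
  -- now show R = F₁
  have hspanR : Submodule.span ℚ R = Submodule.span ℚ ({r} : Set (Fin n → ℚ)) :=
    span_dim_one hrank hrR hr0
  have hRF₁ : R ⊆ F₁ := by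
    intro y hyR
    have hy := hyR
    rw [hR] at hy
    obtain ⟨hyσ, hyc⟩ := hy
    rw [hσ] at hyσ
    obtain ⟨y₁, hy₁, y₂, hy₂, rfl⟩ := sum_decomp B₁ B₂ hB₁ hB₂ hyσ
    have hcy₁ : 0 ≤ dotQ c y₁ := hc₁ y₁ hy₁
    have hcy₂ : 0 ≤ dotQ c y₂ := hc y₂ (hsub₂ hy₂)
    rw [dotQ_add] at hyc
    have hcy₁0 : dotQ c y₁ = 0 := by linarith
    have hcy₂0 : dotQ c y₂ = 0 := by linarith
    have hy₂R : y₂ ∈ R := by rw [hR]; exact ⟨hsub₂ hy₂, hcy₂0⟩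
    have hy₂0 : y₂ = 0 := by
      by_contra hy₂0
      -- y₂ ∈ span R = span {r}; r ∈ span σ₂ then, so r ∈ span{a}, a ∈ F₁: contra
      have h4 : y₂ ∈ Submodule.span ℚ ({r} : Set (Fin n → ℚ)) := by
        rw [← hspanR]; exact Submodule.subset_span hy₂R
      obtain ⟨t, ht⟩ := Submodule.mem_span_singleton.mp h4
      have ht0 : t ≠ 0 := by rintro rfl; simp at ht; exact hy₂0 ht.symm
      have hrs₂ : r ∈ Submodule.span ℚ σ₂ := by
        have : r = t⁻¹ • y₂ := by rw [← ht, smul_smul, inv_mul_cancel₀ ht0, one_smul]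
        rw [this]
        exact Submodule.smul_mem _ _ (Submodule.subset_span hy₂)
      have hrs₁ : r ∈ Submodule.span ℚ σ₁ := Submodule.subset_span hrσ₁
      have hra : r ∈ Submodule.span ℚ ({a} : Set (Fin n → ℚ)) := by
        rw [← hspan]; exact ⟨hrs₁, hrs₂⟩
      obtain ⟨s, hs⟩ := Submodule.mem_span_singleton.mp hra
      have hs0 : s ≠ 0 := by rintro rfl; simp at hs; exact hr0 hs.symm
      have hca : dotQ c a = 0 := by
        have : dotQ c (s • a) = 0 := by rw [hs]; rw [hR] at hrR; exact hrR.2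
        rw [dotQ_smul] at this
        rcases mul_eq_zero.mp this with h | h
        · exact absurd h hs0
        · exact h
      exact hint₁ ⟨F₁, hexF₁, ⟨ha₁, hca⟩⟩
    rw [hy₂0, add_zero]
    exact ⟨hy₁, hcy₁0⟩
  have hRF : R = F₁ := Set.Subset.antisymm hRF₁ hF₁R
  rw [hRF]
  exact hexF₁

noncomputable def dotL {n : ℕ} (c : Fin n → ℚ) : (Fin n → ℚ) →ₗ[ℚ] ℚ where
  toFun := dotQ c
  map_add' := dotQ_add c
  map_smul' := fun q x => by simp [dotQ_smul]

@[simp] lemma dotL_apply {n : ℕ} (c x : Fin n → ℚ) : dotL c x = dotQ c x := rfl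

/-- Direction 1: an extreme ray of σ₁ is an extreme ray of σ. -/
lemma extreme_ray_extend {n : ℕ} {σ₁ σ₂ σ : Set (Fin n → ℚ)} (B₁ B₂ : Finset (Fin n → ℚ))
    (hB₁ : σ₁ = posSpan (B₁ : Set (Fin n → ℚ))) (hB₂ : σ₂ = posSpan (B₂ : Set (Fin n → ℚ)))
    (hs₂ : StronglyConvex σ₂) {a : Fin n → ℚ} (ha₁ : a ∈ σ₁) (ha₂ : a ∈ σ₂)
    (hspan : Submodule.span ℚ σ₁ ⊓ Submodule.span ℚ σ₂ = Submodule.span ℚ {a})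
    (hσ : σ = posSpan (σ₁ ∪ σ₂))
    (hint₁ : ¬ OnExtremeRay σ₁ a)
    {R : Set (Fin n → ℚ)} (hex : IsExtremeRay σ₁ R) : IsExtremeRay σ R := by
  obtain ⟨c, hc₁, hRdef, hrank⟩ := hex
  have hsub₁ : σ₁ ⊆ σ := by rw [hσ]; exact subset_sum_left
  have hsub₂ : σ₂ ⊆ σ := by rw [hσ]; exact subset_sum_right
  have haR : a ∉ R := fun h => hint₁ ⟨R, ⟨c, hc₁, hRdef, hrank⟩, h⟩
  have hca : 0 < dotQ c a := by
    rcases (hc₁ a ha₁).lt_or_eq with h | h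
    · exact h
    · exact absurd (by rw [hRdef]; exact ⟨ha₁, h.symm⟩) haR
  obtain ⟨w, hw0, hwstrict⟩ := exists_strict_functional B₂ (hB₂ ▸ hs₂)
  rw [← hB₂] at hw0 hwstrict
  have ha0 : a ≠ 0 := by rintro rfl; rw [dotQ_zero] at hca; exact lt_irrefl 0 hca
  have hwa : 0 < dotQ w a := by
    rcases (hw0 a ha₂).lt_or_eq with h | h
    · exact h
    · exact absurd (hwstrict a ha₂ h.symm) ha0
  set γ : ℚ := dotQ c a / dotQ w a with hγdef
  have hγ : 0 < γ := div_pos hca hwa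
  have hT : ∀ x ∈ Submodule.span ℚ σ₁ ⊓ Submodule.span ℚ σ₂, dotL c x = (γ • dotL w) x := by
    intro x hx
    rw [hspan] at hx
    obtain ⟨s, rfl⟩ := Submodule.mem_span_singleton.mp hx
    rw [map_smul, map_smul]
    simp only [dotL_apply, LinearMap.smul_apply, dotL_apply, smul_eq_mul]
    rw [hγdef]
    field_simp
  obtain ⟨c', hc'₁, hc'₂⟩ := exists_extension _ _ _ _ hT
  have hc'σ₁ : ∀ x ∈ σ₁, dotQ c' x = dotQ c x := fun x hx => by
    rw [hc'₁ x (Submodule.subset_span hx)]; rfl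
  have hc'σ₂ : ∀ x ∈ σ₂, dotQ c' x = γ * dotQ w x := fun x hx => by
    rw [hc'₂ x (Submodule.subset_span hx)]
    simp [smul_eq_mul]
  refine ⟨c', ?_, ?_, ?_⟩
  · intro x hx
    rw [hσ] at hx
    obtain ⟨x₁, hx₁, x₂, hx₂, rfl⟩ := sum_decomp B₁ B₂ hB₁ hB₂ hx
    rw [dotQ_add, hc'σ₁ x₁ hx₁, hc'σ₂ x₂ hx₂]
    have := hc₁ x₁ hx₁
    have := hw0 x₂ hx₂
    positivity
  · apply Set.Subset.antisymm
    · intro x hxR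
      have hx := hxR
      rw [hRdef] at hx
      exact ⟨hsub₁ hx.1, by rw [hc'σ₁ x hx.1]; exact hx.2⟩
    · rintro x ⟨hxσ, hxc'⟩
      rw [hσ] at hxσ
      obtain ⟨x₁, hx₁, x₂, hx₂, rfl⟩ := sum_decomp B₁ B₂ hB₁ hB₂ hxσ
      rw [dotQ_add, hc'σ₁ x₁ hx₁, hc'σ₂ x₂ hx₂] at hxc'
      have h1 : 0 ≤ dotQ c x₁ := hc₁ x₁ hx₁
      have h2 : 0 ≤ dotQ w x₂ := hw0 x₂ hx₂
      have hx₁0 : dotQ c x₁ = 0 := by nlinarith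
      have hx₂0 : dotQ w x₂ = 0 := by nlinarith
      have : x₂ = 0 := hwstrict x₂ hx₂ hx₂0
      rw [this, add_zero]
      rw [hRdef]
      exact ⟨hx₁, hx₁0⟩
  · exact hrank

/-- A polyhedral cone has finitely many extreme rays. -/
lemma extremeRays_finite {n : ℕ} {σ : Set (Fin n → ℚ)} (h : IsPolyCone σ) :
    {R | IsExtremeRay σ R}.Finite := by
  obtain ⟨B, rfl⟩ := h
  apply Set.Finite.subset (Set.Finite.image
    (fun b => posSpan (B : Set (Fin n → ℚ)) ∩ (Submodule.span ℚ {b} : Set (Fin n → ℚ)))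
    B.finite_toSet)
  rintro R ⟨c, hc, hRdef, hrank⟩
  obtain ⟨r, hrR, hr0⟩ := exists_nonzero_of_dim_one hrank
  have hrσ : r ∈ posSpan (B : Set (Fin n → ℚ)) := by rw [hRdef] at hrR; exact hrR.1
  have hrc : dotQ c r = 0 := by rw [hRdef] at hrR; exact hrR.2
  obtain ⟨k, co, b, hco, hb, hrsum⟩ := hrσ
  have hterms : ∀ i ∈ Finset.univ, co i * dotQ c (b i) = 0 := by
    apply (Finset.sum_eq_zero_iff_of_nonneg (fun i _ =>
      mul_nonneg (hco i) (hc (b i) (subset_posSpan _ (hb i))))).mp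
    rw [← hrc, hrsum, dotQ_sum]
    exact (Finset.sum_congr rfl fun i _ => (dotQ_smul c (co i) (b i)).symm)
  have hex : ∃ i, co i ≠ 0 ∧ b i ≠ 0 := by
    by_contra hno
    push_neg at hno
    apply hr0
    rw [hrsum]
    apply Finset.sum_eq_zero
    intro i _
    rcases eq_or_ne (co i) 0 with h0 | h0
    · rw [h0, zero_smul]
    · rw [hno i h0, smul_zero]
  obtain ⟨i, hcoi, hbi⟩ := hex
  have hbc : dotQ c (b i) = 0 := by
    rcases mul_eq_zero.mp (hterms i (Finset.mem_univ i)) with h | h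
    · exact absurd h hcoi
    · exact h
  have hbR : b i ∈ R := by rw [hRdef]; exact ⟨subset_posSpan _ (hb i), hbc⟩
  refine ⟨b i, hb i, ?_⟩
  have hspanR : Submodule.span ℚ R = Submodule.span ℚ ({b i} : Set (Fin n → ℚ)) :=
    span_dim_one hrank hbR hbi
  apply Set.Subset.antisymm
  · rintro x ⟨hx1, hx2⟩
    obtain ⟨t, rfl⟩ := Submodule.mem_span_singleton.mp (by exact_mod_cast hx2 :
      x ∈ Submodule.span ℚ ({b i} : Set (Fin n → ℚ)))
    rw [hRdef]
    exact ⟨hx1, by rw [dotQ_smul, hbc, mul_zero]⟩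
  · intro x hxR
    have hx := hxR
    rw [hRdef] at hx
    refine ⟨hx.1, ?_⟩
    have : x ∈ Submodule.span ℚ R := Submodule.subset_span hxR
    rw [hspanR] at this
    exact_mod_cast this

/-- No set is an extreme ray of both σ₁ and σ₂. -/
lemma rays_disjoint {n : ℕ} {σ₁ σ₂ : Set (Fin n → ℚ)} (B₁ : Finset (Fin n → ℚ))
    (hB₁ : σ₁ = posSpan (B₁ : Set (Fin n → ℚ))) (hs₁ : StronglyConvex σ₁)
    {a : Fin n → ℚ} (ha₁ : a ∈ σ₁)
    (hspan : Submodule.span ℚ σ₁ ⊓ Submodule.span ℚ σ₂ = Submodule.span ℚ {a})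
    (hint₁ : ¬ OnExtremeRay σ₁ a)
    {R : Set (Fin n → ℚ)} (h1 : IsExtremeRay σ₁ R) (h2 : IsExtremeRay σ₂ R) : False := by
  obtain ⟨c₁, hc₁, hRdef₁, hrank⟩ := h1
  obtain ⟨c₂, hc₂, hRdef₂, -⟩ := h2
  obtain ⟨r, hrR, hr0⟩ := exists_nonzero_of_dim_one hrank
  have hrσ₁ : r ∈ σ₁ := by rw [hRdef₁] at hrR; exact hrR.1
  have hrσ₂ : r ∈ σ₂ := by rw [hRdef₂] at hrR; exact hrR.1
  have hra : r ∈ Submodule.span ℚ ({a} : Set (Fin n → ℚ)) := by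
    rw [← hspan]
    exact ⟨Submodule.subset_span hrσ₁, Submodule.subset_span hrσ₂⟩
  obtain ⟨s, hs⟩ := Submodule.mem_span_singleton.mp hra
  have hs0 : s ≠ 0 := by rintro rfl; simp at hs; exact hr0 hs.symm
  rcases hs0.lt_or_gt with hneg | hpos
  · -- s < 0 : -r ∈ σ₁, contradiction with strong convexity
    have hnr : -r = (-s) • a := by rw [← hs, neg_smul]
    have : -r ∈ σ₁ := by
      rw [hnr, hB₁]
      exact posSpan_smul_mem (by linarith) (hB₁ ▸ ha₁)
    exact hr0 (hs₁ r hrσ₁ this)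
  · -- s > 0 : a ∈ R, contradicting internality
    have haR : a ∈ R := by
      have : a = s⁻¹ • r := by rw [← hs, smul_smul, inv_mul_cancel₀ hs0, one_smul]
      rw [hRdef₁, this]
      constructor
      · rw [hB₁]
        exact posSpan_smul_mem (by positivity) (hB₁ ▸ hrσ₁)
      · rw [dotQ_smul]
        have : dotQ c₁ r = 0 := by rw [hRdef₁] at hrR; exact hrR.2
        rw [this, mul_zero]
    exact hint₁ ⟨R, ⟨c₁, hc₁, hRdef₁, hrank⟩, haR⟩

end Aux

/-- For a direct sum of internal type, the extreme rays of the sum are exactly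
the extreme rays of the summands, so their number is `k₁ + k₂`. -/
theorem directSum_internal_rays {n : ℕ} (σ₁ σ₂ σ : Set (Fin n → ℚ))
    (h₁ : IsPolyCone σ₁) (h₂ : IsPolyCone σ₂)
    (hs₁ : StronglyConvex σ₁) (hs₂ : StronglyConvex σ₂)
    (a : Fin n → ℚ) (hds : IsDirectSumAlong σ₁ σ₂ σ a)
    (hint₁ : ¬ OnExtremeRay σ₁ a) (hint₂ : ¬ OnExtremeRay σ₂ a)
    (k₁ k₂ : ℕ)
    (hk₁ : {R | IsExtremeRay σ₁ R}.ncard = k₁)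
    (hk₂ : {R | IsExtremeRay σ₂ R}.ncard = k₂) :
    {R | IsExtremeRay σ R} = {R | IsExtremeRay σ₁ R} ∪ {R | IsExtremeRay σ₂ R} ∧
    {R | IsExtremeRay σ R}.ncard = k₁ + k₂ := by
  obtain ⟨⟨ha₁, ha₂⟩, hspan, hσ⟩ := hds
  obtain ⟨B₁, hB₁⟩ := h₁
  obtain ⟨B₂, hB₂⟩ := h₂
  have hspan' : Submodule.span ℚ σ₂ ⊓ Submodule.span ℚ σ₁ = Submodule.span ℚ {a} := by
    rw [inf_comm]; exact hspan
  have hσ' : σ = posSpan (σ₂ ∪ σ₁) := by rw [Set.union_comm]; exact hσ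
  have hseteq : {R | IsExtremeRay σ R} = {R | IsExtremeRay σ₁ R} ∪ {R | IsExtremeRay σ₂ R} := by
    ext R
    simp only [Set.mem_setOf_eq, Set.mem_union]
    constructor
    · rintro ⟨c, hc, hRdef, hrank⟩
      obtain ⟨r, hrR, hr0⟩ := exists_nonzero_of_dim_one hrank
      have hrσ : r ∈ σ := by rw [hRdef] at hrR; exact hrR.1
      have hrc : dotQ c r = 0 := by rw [hRdef] at hrR; exact hrR.2
      rw [hσ] at hrσ
      obtain ⟨x₁, hx₁, x₂, hx₂, hxs⟩ := sum_decomp B₁ B₂ hB₁ hB₂ hrσ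
      have hsub₁ : σ₁ ⊆ σ := by rw [hσ]; exact subset_sum_left
      have hsub₂ : σ₂ ⊆ σ := by rw [hσ]; exact subset_sum_right
      have hcx₁ : 0 ≤ dotQ c x₁ := hc x₁ (hsub₁ hx₁)
      have hcx₂ : 0 ≤ dotQ c x₂ := hc x₂ (hsub₂ hx₂)
      have hsum0 : dotQ c x₁ + dotQ c x₂ = 0 := by rw [← dotQ_add, ← hxs]; exact hrc
      have hcx₁0 : dotQ c x₁ = 0 := by linarith
      have hcx₂0 : dotQ c x₂ = 0 := by linarith
      by_cases hx₁0 : x₁ = 0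
      · right
        have hrx₂ : r = x₂ := by rw [hxs, hx₁0, zero_add]
        exact extreme_ray_restrict B₂ B₁ hB₂ hB₁ hspan' hσ' hint₂ ha₂ hc hRdef hrank
          hrR hr0 (hrx₂ ▸ hx₂)
      · left
        have hx₁R : x₁ ∈ R := by rw [hRdef]; exact ⟨hsub₁ hx₁, hcx₁0⟩
        exact extreme_ray_restrict B₁ B₂ hB₁ hB₂ hspan hσ hint₁ ha₁ hc hRdef hrank
          hx₁R hx₁0 hx₁
    · rintro (h | h)
      · exact extreme_ray_extend B₁ B₂ hB₁ hB₂ hs₂ ha₁ ha₂ hspan hσ hint₁ h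
      · exact extreme_ray_extend B₂ B₁ hB₂ hB₁ hs₁ ha₂ ha₁ hspan' hσ' hint₂ h
  refine ⟨hseteq, ?_⟩
  rw [hseteq]
  rw [Set.ncard_union_eq ?_ (extremeRays_finite ⟨B₁, hB₁⟩) (extremeRays_finite ⟨B₂, hB₂⟩),
    hk₁, hk₂]
  exact Set.disjoint_left.mpr fun {R} hR1 hR2 =>
    rays_disjoint B₁ hB₁ hs₁ ha₁ hspan hint₁ hR1 hR2
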